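/- Let T > 0, let λ : [0,T] → [0,∞) be continuous with λ > 0 on (0,T], Λ(t) := ∫₀ᵗ λ(s) ds, and let c > 0. Let θ : [0,T] × ℝ^d × ℝ^d → ℝ be differentiable in (x,ξ) with |∇ₓθ(t,x,ξ)| ≤ c·λ(t)·⟨ξ⟩ and |∇_ξθ(t,x,ξ)| ≤ c·λ(t)·⟨x⟩. Then for all N > N₁ > 0 there exists T₀ ∈ (0,T] such that: for every 0 ≤ s ≤ T₀ and every differentiable solution q, p : [s, T₀] → ℝ^d of q' = ∇_ξθ(τ,q,p), p' = −∇ₓθ(τ,q,p), if Λ(s)·⟨q(s)⟩⟨p(s)⟩ ≥ N·ln(⟨q(s)⟩⟨p(s)⟩), then Λ(t)·⟨q(t)⟩⟨p(t)⟩ ≥ N₁·ln(⟨q(t)⟩⟨p(t)⟩) for all t ∈ [s, T₀]. -/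

import Mathlib

/-- `Λ(t) = ∫₀ᵗ λ(s) ds`. -/
noncomputable def Lam (lam : ℝ → ℝ) (t : ℝ) : ℝ := ∫ s in (0:ℝ)..t, lam s

/-- The weight `⟨y⟩ = (e + |y|²)^{1/2}`. -/
noncomputable def jw {d : ℕ} (y : EuclideanSpace ℝ (Fin d)) : ℝ :=
  Real.sqrt (Real.exp 1 + ‖y‖ ^ 2)

section Aux

variable {d : ℕ}

lemma jw_sq (y : EuclideanSpace ℝ (Fin d)) : jw y ^ 2 = Real.exp 1 + ‖y‖ ^ 2 :=
  Real.sq_sqrt (by positivity)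

lemma jw_pos (y : EuclideanSpace ℝ (Fin d)) : 0 < jw y :=
  Real.sqrt_pos.2 (by positivity)

lemma norm_le_jw (y : EuclideanSpace ℝ (Fin d)) : ‖y‖ ≤ jw y := by
  nlinarith [jw_sq y, jw_pos y, norm_nonneg y, Real.exp_pos 1]

lemma exp_one_le_jw_mul (x y : EuclideanSpace ℝ (Fin d)) :
    Real.exp 1 ≤ jw x * jw y := by
  have h1 : Real.sqrt (Real.exp 1) ≤ jw x :=
    Real.sqrt_le_sqrt (by nlinarith [sq_nonneg ‖x‖])
  have h2 : Real.sqrt (Real.exp 1) ≤ jw y :=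
    Real.sqrt_le_sqrt (by nlinarith [sq_nonneg ‖y‖])
  have h3 : Real.sqrt (Real.exp 1) * Real.sqrt (Real.exp 1) = Real.exp 1 :=
    Real.mul_self_sqrt (Real.exp_pos 1).le
  nlinarith [Real.sqrt_nonneg (Real.exp 1)]

lemma one_le_log_jw_mul (x y : EuclideanSpace ℝ (Fin d)) :
    1 ≤ Real.log (jw x * jw y) := by
  have := Real.log_le_log (Real.exp_pos 1) (exp_one_le_jw_mul x y)
  simpa [Real.log_exp] using this

lemma log_jw_mul (x y : EuclideanSpace ℝ (Fin d)) :
    Real.log (jw x * jw y) =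
      (Real.log (Real.exp 1 + ‖x‖ ^ 2) + Real.log (Real.exp 1 + ‖y‖ ^ 2)) / 2 := by
  rw [Real.log_mul (jw_pos x).ne' (jw_pos y).ne']
  unfold jw
  rw [Real.log_sqrt (by positivity), Real.log_sqrt (by positivity)]
  ring

lemma hasDerivWithinAt_log_weight {q : ℝ → EuclideanSpace ℝ (Fin d)}
    {Q : EuclideanSpace ℝ (Fin d)} {S : Set ℝ} {τ : ℝ}
    (hq : HasDerivWithinAt q Q S τ) :
    HasDerivWithinAt (fun u => Real.log (Real.exp 1 + ‖q u‖ ^ 2))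
      (2 * (inner ℝ (q τ) Q : ℝ) / (Real.exp 1 + ‖q τ‖ ^ 2)) S τ := by
  have h1 : HasDerivWithinAt (fun u => (inner ℝ (q u) (q u) : ℝ))
      ((inner ℝ (q τ) Q : ℝ) + (inner ℝ Q (q τ) : ℝ)) S τ := hq.inner ℝ hq
  have h2 : HasDerivWithinAt (fun u => Real.exp 1 + ‖q u‖ ^ 2)
      (2 * (inner ℝ (q τ) Q : ℝ)) S τ := by
    have heq : (fun u => Real.exp 1 + ‖q u‖ ^ 2)
        = fun u => Real.exp 1 + (inner ℝ (q u) (q u) : ℝ) := by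
      funext u; rw [real_inner_self_eq_norm_sq]
    rw [heq]
    have h3 := h1.const_add (Real.exp 1)
    exact h3.congr_deriv (by rw [real_inner_comm Q (q τ)]; ring)
  exact h2.log (by positivity)

lemma log_weight_deriv_bound {q : ℝ → EuclideanSpace ℝ (Fin d)}
    {Q : EuclideanSpace ℝ (Fin d)} {τ C : ℝ}
    (hQ : ‖Q‖ ≤ C * jw (q τ)) (hC : 0 ≤ C) :
    |2 * (inner ℝ (q τ) Q : ℝ) / (Real.exp 1 + ‖q τ‖ ^ 2)| ≤ 2 * C := by
  have hden : (0:ℝ) < Real.exp 1 + ‖q τ‖ ^ 2 := by positivity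
  rw [abs_div, abs_of_pos hden, div_le_iff₀ hden]
  have h1 : |(inner ℝ (q τ) Q : ℝ)| ≤ ‖q τ‖ * ‖Q‖ := abs_real_inner_le_norm _ _
  have h2 : ‖q τ‖ * ‖Q‖ ≤ jw (q τ) * (C * jw (q τ)) :=
    mul_le_mul (norm_le_jw _) hQ (norm_nonneg _) (jw_pos _).le
  have h3 : jw (q τ) * (C * jw (q τ)) = C * (Real.exp 1 + ‖q τ‖ ^ 2) := by
    have := jw_sq (q τ); nlinarith
  rw [abs_mul]
  have : |(2:ℝ)| = 2 := by norm_num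
  nlinarith [abs_nonneg (inner ℝ (q τ) Q : ℝ)]

end Aux

set_option maxHeartbeats 1000000 in
/-- Lemma 5.2 of the paper: if the initial data of the Hamiltonian flow lie in the
hyperbolic zone `Z_hyp(N)`, then the flow stays in `Z_hyp(N₁)` for `N₁ < N` on a
sufficiently small time interval `[0,T₀]`. -/
theorem flow_stays_in_hyperbolic_zone
    (d : ℕ) (T : ℝ) (hT : 0 < T) (lam : ℝ → ℝ)
    (hcont : ContinuousOn lam (Set.Icc 0 T))
    (hnn : ∀ t ∈ Set.Icc 0 T, 0 ≤ lam t)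
    (hpos : ∀ t ∈ Set.Ioc 0 T, 0 < lam t)
    (c : ℝ) (hc : 0 < c)
    (θ : ℝ → EuclideanSpace ℝ (Fin d) → EuclideanSpace ℝ (Fin d) → ℝ)
    (hdiffx : ∀ t ∈ Set.Icc 0 T, ∀ (x ξ : EuclideanSpace ℝ (Fin d)),
      DifferentiableAt ℝ (fun x' => θ t x' ξ) x)
    (hdiffξ : ∀ t ∈ Set.Icc 0 T, ∀ (x ξ : EuclideanSpace ℝ (Fin d)),
      DifferentiableAt ℝ (fun ξ' => θ t x ξ') ξ)
    (hgx : ∀ t ∈ Set.Icc 0 T, ∀ (x ξ : EuclideanSpace ℝ (Fin d)),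
      ‖gradient (fun x' => θ t x' ξ) x‖ ≤ c * lam t * jw ξ)
    (hgξ : ∀ t ∈ Set.Icc 0 T, ∀ (x ξ : EuclideanSpace ℝ (Fin d)),
      ‖gradient (fun ξ' => θ t x ξ') ξ‖ ≤ c * lam t * jw x) :
    ∀ N N₁ : ℝ, 0 < N₁ → N₁ < N →
      ∃ T₀ ∈ Set.Ioc 0 T, ∀ s ∈ Set.Icc 0 T₀,
        ∀ q p : ℝ → EuclideanSpace ℝ (Fin d),
          (∀ τ ∈ Set.Icc s T₀, HasDerivWithinAt q
            (gradient (fun ξ' => θ τ (q τ) ξ') (p τ)) (Set.Icc s T₀) τ) →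
          (∀ τ ∈ Set.Icc s T₀, HasDerivWithinAt p
            (-(gradient (fun x' => θ τ x' (p τ)) (q τ))) (Set.Icc s T₀) τ) →
          N * Real.log (jw (q s) * jw (p s)) ≤ Lam lam s * (jw (q s) * jw (p s)) →
          ∀ t ∈ Set.Icc s T₀,
            N₁ * Real.log (jw (q t) * jw (p t)) ≤
              Lam lam t * (jw (q t) * jw (p t)) := by
  intro N N₁ hN₁ hNN
  -- a uniform bound on lam
  obtain ⟨tM, htM, hM⟩ := isCompact_Icc.exists_isMaxOn (Set.nonempty_Icc.2 hT.le) hcont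
  set M : ℝ := max (lam tM) 1 with hMdef
  have hMpos : (0:ℝ) < M := lt_of_lt_of_le one_pos (le_max_right _ _)
  have hMb : ∀ t ∈ Set.Icc 0 T, lam t ≤ M := fun t ht => (hM ht).trans (le_max_left _ _)
  -- the smallness parameter a
  set r : ℝ := N / N₁ with hrdef
  have hr : 1 < r := (one_lt_div hN₁).2 hNN
  have hrs : 1 < Real.sqrt r := by
    have := Real.sqrt_lt_sqrt (by norm_num) hr
    simpa [Real.sqrt_one] using this
  set a : ℝ := min (Real.log (Real.sqrt r)) (Real.sqrt r - 1) with hadef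
  have hapos : 0 < a := lt_min (Real.log_pos hrs) (by linarith)
  have hkey : N₁ * (1 + a) ≤ N * Real.exp (-a) := by
    have h1 : 1 + a ≤ Real.sqrt r := by
      have := min_le_right (Real.log (Real.sqrt r)) (Real.sqrt r - 1); linarith [hadef ▸ this]
    have h2 : Real.exp a ≤ Real.sqrt r := by
      have hle : a ≤ Real.log (Real.sqrt r) := min_le_left _ _
      calc Real.exp a ≤ Real.exp (Real.log (Real.sqrt r)) := Real.exp_le_exp.2 hle
        _ = Real.sqrt r := Real.exp_log (by linarith)
    have h3 : (1 + a) * Real.exp a ≤ r := by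
      calc (1 + a) * Real.exp a ≤ Real.sqrt r * Real.sqrt r :=
            mul_le_mul h1 h2 (Real.exp_pos a).le (by linarith)
        _ = r := Real.mul_self_sqrt (by linarith)
    have h4 : N₁ * r = N := by rw [hrdef]; field_simp [hN₁.ne']
    have h5 : N₁ * ((1 + a) * Real.exp a) ≤ N := by
      calc N₁ * ((1 + a) * Real.exp a) ≤ N₁ * r := by
            exact mul_le_mul_of_nonneg_left h3 hN₁.le
        _ = N := h4
    have h6 : Real.exp a * Real.exp (-a) = 1 := by
      rw [← Real.exp_add]; simp
    nlinarith [Real.exp_pos (-a), Real.exp_pos a]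
  -- choose T₀
  set T₀ : ℝ := min T (a / (2 * c * M)) with hT₀def
  have hT₀pos : 0 < T₀ := lt_min hT (by positivity)
  have hT₀T : T₀ ≤ T := min_le_left _ _
  refine ⟨T₀, ⟨hT₀pos, hT₀T⟩, ?_⟩
  intro s hs q p hq hp hinit t ht
  have hsub : Set.Icc s T₀ ⊆ Set.Icc 0 T := Set.Icc_subset_Icc hs.1 hT₀T
  -- the function F = log(e+|q|²)+log(e+|p|²) and its derivative D
  set F : ℝ → ℝ := fun τ =>
    Real.log (Real.exp 1 + ‖q τ‖ ^ 2) + Real.log (Real.exp 1 + ‖p τ‖ ^ 2) with hFdef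
  set D : ℝ → ℝ := fun τ =>
    2 * (inner ℝ (q τ) (gradient (fun ξ' => θ τ (q τ) ξ') (p τ)) : ℝ)
      / (Real.exp 1 + ‖q τ‖ ^ 2)
    + 2 * (inner ℝ (p τ) (-(gradient (fun x' => θ τ x' (p τ)) (q τ))) : ℝ)
      / (Real.exp 1 + ‖p τ‖ ^ 2) with hDdef
  have hF : ∀ τ ∈ Set.Icc s T₀, HasDerivWithinAt F (D τ) (Set.Icc s T₀) τ := by
    intro τ hτ
    exact (hasDerivWithinAt_log_weight (hq τ hτ)).add
      (hasDerivWithinAt_log_weight (hp τ hτ))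
  have hDb : ∀ τ ∈ Set.Icc s T₀, ‖D τ‖ ≤ 4 * c * M := by
    intro τ hτ
    have hτ' : τ ∈ Set.Icc 0 T := hsub hτ
    have hl : 0 ≤ lam τ := hnn τ hτ'
    have hCM : c * lam τ ≤ c * M := mul_le_mul_of_nonneg_left (hMb τ hτ') hc.le
    have hb1 : ‖gradient (fun ξ' => θ τ (q τ) ξ') (p τ)‖ ≤ (c * M) * jw (q τ) := by
      calc _ ≤ c * lam τ * jw (q τ) := hgξ τ hτ' (q τ) (p τ)
        _ ≤ c * M * jw (q τ) := mul_le_mul_of_nonneg_right hCM (jw_pos _).le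
    have hb2 : ‖-(gradient (fun x' => θ τ x' (p τ)) (q τ))‖ ≤ (c * M) * jw (p τ) := by
      rw [norm_neg]
      calc _ ≤ c * lam τ * jw (p τ) := hgx τ hτ' (q τ) (p τ)
        _ ≤ c * M * jw (p τ) := mul_le_mul_of_nonneg_right hCM (jw_pos _).le
    have e1 := log_weight_deriv_bound (q := q) hb1 (by positivity)
    have e2 := log_weight_deriv_bound (q := p) hb2 (by positivity)
    have := abs_add_le
      (2 * (inner ℝ (q τ) (gradient (fun ξ' => θ τ (q τ) ξ') (p τ)) : ℝ)
        / (Real.exp 1 + ‖q τ‖ ^ 2))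
      (2 * (inner ℝ (p τ) (-(gradient (fun x' => θ τ x' (p τ)) (q τ))) : ℝ)
        / (Real.exp 1 + ‖p τ‖ ^ 2))
    simp only [Real.norm_eq_abs, hDdef]
    linarith
  -- mean value inequality
  have hmvt := norm_image_sub_le_of_norm_deriv_le_segment' hF
    (fun x hx => hDb x (Set.Ico_subset_Icc_self hx)) t ht
  -- |F t - F s| ≤ 2a
  have hFts : |F t - F s| ≤ 2 * a := by
    have h1 : t - s ≤ T₀ := by
      have := ht.2; have := hs.1; linarith
    have h2 : T₀ ≤ a / (2 * c * M) := min_le_right _ _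
    have h3 : (4 * c * M) * (t - s) ≤ (4 * c * M) * (a / (2 * c * M)) := by
      apply mul_le_mul_of_nonneg_left (h1.trans h2) (by positivity)
    have h4 : (4 * c * M) * (a / (2 * c * M)) = 2 * a := by field_simp; ring
    rw [Real.norm_eq_abs] at hmvt
    linarith
  -- translate to log of the weights
  set fs : ℝ := Real.log (jw (q s) * jw (p s)) with hfsdef
  set ftt : ℝ := Real.log (jw (q t) * jw (p t)) with httdef
  have hFs2 : fs = F s / 2 := by rw [hfsdef, log_jw_mul]
  have hFt2 : ftt = F t / 2 := by rw [httdef, log_jw_mul]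
  have hfs1 : 1 ≤ fs := one_le_log_jw_mul _ _
  have hws : 0 < jw (q s) * jw (p s) := mul_pos (jw_pos _) (jw_pos _)
  have hwt : 0 < jw (q t) * jw (p t) := mul_pos (jw_pos _) (jw_pos _)
  have hfse : Real.exp fs = jw (q s) * jw (p s) := by rw [hfsdef, Real.exp_log hws]
  have htte : Real.exp ftt = jw (q t) * jw (p t) := by rw [httdef, Real.exp_log hwt]
  clear_value F D fs ftt
  have habs : |ftt - fs| ≤ a := by
    rw [hFs2, hFt2, abs_le]
    rw [abs_le] at hFts
    constructor <;> linarith [hFts.1, hFts.2]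
  -- monotonicity of Lam
  have hΛmono : ∀ u v : ℝ, 0 ≤ u → u ≤ v → v ≤ T → Lam lam u ≤ Lam lam v := by
    intro u v hu huv hvT
    have hi1 : IntervalIntegrable lam MeasureTheory.volume 0 u := by
      apply ContinuousOn.intervalIntegrable
      apply hcont.mono
      rw [Set.uIcc_of_le hu]
      exact Set.Icc_subset_Icc le_rfl (huv.trans hvT)
    have hi2 : IntervalIntegrable lam MeasureTheory.volume u v := by
      apply ContinuousOn.intervalIntegrable
      apply hcont.mono
      rw [Set.uIcc_of_le huv]
      exact Set.Icc_subset_Icc hu hvT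
    have hadd := intervalIntegral.integral_add_adjacent_intervals hi1 hi2
    have hnn' : 0 ≤ ∫ x in u..v, lam x :=
      intervalIntegral.integral_nonneg huv
        (fun x hx => hnn x ⟨hu.trans hx.1, hx.2.trans hvT⟩)
    have : Lam lam v = Lam lam u + ∫ x in u..v, lam x := by
      rw [Lam, Lam, ← hadd]
    linarith
  have hΛ0 : Lam lam 0 = 0 := by rw [Lam, intervalIntegral.integral_same]
  have hΛs0 : 0 ≤ Lam lam s := by
    have := hΛmono 0 s le_rfl hs.1 (hs.2.trans hT₀T)
    rw [hΛ0] at this; exact this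
  have hΛst : Lam lam s ≤ Lam lam t := hΛmono s t hs.1 ht.1 (ht.2.trans hT₀T)
  -- exponential bounds
  have hwt_ge : jw (q s) * jw (p s) * Real.exp (-a) ≤ jw (q t) * jw (p t) := by
    have h1 : fs - a ≤ ftt := by
      rw [abs_le] at habs; linarith [habs.1]
    calc jw (q s) * jw (p s) * Real.exp (-a)
        = Real.exp fs * Real.exp (-a) := by rw [hfse]
      _ = Real.exp (fs + -a) := (Real.exp_add _ _).symm
      _ ≤ Real.exp ftt := Real.exp_le_exp.2 (by linarith)
      _ = jw (q t) * jw (p t) := htte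
  have hft_le : ftt ≤ fs + a := by rw [abs_le] at habs; linarith [habs.2]
  -- final chain
  have step1 : N₁ * ftt ≤ N₁ * (1 + a) * fs := by
    have h0 : a * 1 ≤ a * fs := mul_le_mul_of_nonneg_left hfs1 hapos.le
    have h : ftt ≤ (1 + a) * fs := by linarith
    have h2 := mul_le_mul_of_nonneg_left h hN₁.le
    calc N₁ * ftt ≤ N₁ * ((1 + a) * fs) := h2
      _ = N₁ * (1 + a) * fs := by ring
  have step2 : N₁ * (1 + a) * fs ≤ N * Real.exp (-a) * fs := by
    apply mul_le_mul_of_nonneg_right hkey (by linarith)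
  have step3 : N * Real.exp (-a) * fs ≤ Real.exp (-a) * (Lam lam s * (jw (q s) * jw (p s))) := by
    have h := mul_le_mul_of_nonneg_left hinit (Real.exp_pos (-a)).le
    calc N * Real.exp (-a) * fs = Real.exp (-a) * (N * fs) := by ring
      _ ≤ _ := h
  have step4 : Real.exp (-a) * (Lam lam s * (jw (q s) * jw (p s)))
      ≤ Lam lam t * (jw (q t) * jw (p t)) := by
    have h1 : Real.exp (-a) * (Lam lam s * (jw (q s) * jw (p s)))
        = Lam lam s * (jw (q s) * jw (p s) * Real.exp (-a)) := by ring
    rw [h1]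
    calc Lam lam s * (jw (q s) * jw (p s) * Real.exp (-a))
        ≤ Lam lam s * (jw (q t) * jw (p t)) :=
          mul_le_mul_of_nonneg_left hwt_ge hΛs0
      _ ≤ Lam lam t * (jw (q t) * jw (p t)) :=
          mul_le_mul_of_nonneg_right hΛst hwt.le
  exact le_trans step1 (le_trans step2 (le_trans step3 step4))
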